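/- Suppose sup over (x̃, θ) ∈ B_{ε,x} × Θ of p(x̃|θ) is finite for some ε > 0, where B_{ε,x} = {x̃ : x̃ has the same zero pattern as x and D(x̃^+, x^+) < ε} for a distance D under which the nonzero likelihood x̃^+ ↦ p(x̃^+|θ) is continuous at x^+. Then for each θ ∈ Θ, the ABC posterior π_ε(θ|x) ∝ π(θ) ∫ 1_{B_{ε,x}}(x̃) p(x̃|θ) dx̃ converges to the true posterior π(θ|x) ∝ π(θ) p(x|θ) as ε → 0. -/

import Mathlib

open MeasureTheory

lemma aux_integrableOn {m : ℕ} (x : Fin m → ℝ) {g : (Fin m → ℝ) → ℝ}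
    (hg : Measurable g) (ε C : ℝ)
    (hb : ∀ y ∈ Metric.ball x ε, |g y| ≤ C) :
    IntegrableOn g (Metric.ball x ε) volume := by
  have hc : IntegrableOn (fun _ => C) (Metric.ball x ε) volume :=
    integrableOn_const measure_ball_lt_top.ne
  refine Integrable.mono' hc (hg.aestronglyMeasurable.restrict) ?_
  filter_upwards [ae_restrict_mem measurableSet_ball] with y hy
  exact hb y hy

lemma aux_avg_tendsto {m : ℕ} (x : Fin m → ℝ) {g : (Fin m → ℝ) → ℝ}
    (hg : Measurable g) (C ε₀ : ℝ) (hε₀ : 0 < ε₀)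
    (hb : ∀ y ∈ Metric.ball x ε₀, |g y| ≤ C)
    (hcont : ContinuousAt g x) :
    Filter.Tendsto (fun ε => (∫ y in Metric.ball x ε, g y) /
        (volume (Metric.ball x ε)).toReal)
      (nhdsWithin 0 (Set.Ioi 0)) (nhds (g x)) := by
  rw [Metric.tendsto_nhdsWithin_nhds]
  intro δ hδ
  obtain ⟨r, hr, hrc⟩ := Metric.continuousAt_iff.mp hcont (δ/2) (by linarith)
  refine ⟨min r ε₀, lt_min hr hε₀, fun ε hε hεd => ?_⟩
  have hε0 : 0 < ε := hε
  have hεlt : ε < min r ε₀ := by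
    rw [Real.dist_eq, sub_zero, abs_of_pos hε0] at hεd; exact hεd
  have hsub : Metric.ball x ε ⊆ Metric.ball x ε₀ :=
    Metric.ball_subset_ball (le_of_lt (lt_of_lt_of_le hεlt (min_le_right _ _)))
  have hsubr : Metric.ball x ε ⊆ Metric.ball x r :=
    Metric.ball_subset_ball (le_of_lt (lt_of_lt_of_le hεlt (min_le_left _ _)))
  have hVpos : 0 < (volume (Metric.ball x ε)).toReal :=
    ENNReal.toReal_pos (Metric.measure_ball_pos volume x hε0).ne' measure_ball_lt_top.ne
  have hint : IntegrableOn g (Metric.ball x ε) volume :=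
    aux_integrableOn x hg ε C (fun y hy => hb y (hsub hy))
  set V := (volume (Metric.ball x ε)).toReal with hV
  have key : ‖(∫ y in Metric.ball x ε, g y) - V * g x‖ ≤ (δ/2) * V := by
    have h1 : (∫ y in Metric.ball x ε, g y) - V * g x
        = ∫ y in Metric.ball x ε, (g y - g x) := by
      rw [integral_sub hint (integrableOn_const measure_ball_lt_top.ne),
        setIntegral_const, smul_eq_mul, measureReal_def]
    rw [h1]
    refine norm_setIntegral_le_of_norm_le_const measure_ball_lt_top
      (fun y hy => ?_)
    have := hrc (Metric.mem_ball.mp (hsubr hy))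
    rw [Real.norm_eq_abs]
    exact le_of_lt (by rwa [Real.dist_eq] at this)
  have : dist ((∫ y in Metric.ball x ε, g y) / V) (g x) ≤ δ/2 := by
    rw [Real.dist_eq, div_sub' hVpos.ne']
    rw [abs_div, abs_of_pos hVpos, div_le_iff₀ hVpos]
    simpa [Real.norm_eq_abs] using key
  linarith

/-- Convergence of the ABC posterior to the true posterior for mixed data.
The data consists of `t₀` zeros and a nonzero part `x⁺ ∈ ℝ^m` (`m = t - t₀`), with
likelihood `p(x|θ) = p_X(0|θ)^{t₀}(1-p_X(0|θ))^m p(x⁺|θ)`. Synthetic data is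
accepted when it has the same zero pattern and its nonzero part lies within
distance `ε` of `x⁺`, so the approximate likelihood is
`p_ε(x|θ) = p_X(0|θ)^{t₀}(1-p_X(0|θ))^m · (∫_{B(x⁺,ε)} p(x̃⁺|θ)dx̃ / vol B(x⁺,ε))`.
If `sup_{(x̃,θ) ∈ B_{ε₀,x} × Θ} p(x̃|θ) < ∞` for some `ε₀ > 0` and the continuous
part of the likelihood is continuous at `x⁺`, then for each `θ` the ABC posterior
`π_ε(θ|x) = π(θ)p_ε(x|θ) / ∫ π p_ε` converges to the true posterior
`π(θ|x) = π(θ)p(x|θ) / ∫ π p` as `ε → 0⁺`. -/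
theorem abc_posterior_convergence {Θ : Type*} [MeasurableSpace Θ]
    (ν : Measure Θ) (m t₀ : ℕ) (xplus : Fin m → ℝ)
    (π : Θ → ℝ) (pX0 : Θ → ℝ) (pplus : Θ → (Fin m → ℝ) → ℝ)
    (hπ0 : ∀ θ, 0 ≤ π θ) (hπint : Integrable π ν)
    (hpX0 : ∀ θ, pX0 θ ∈ Set.Icc (0 : ℝ) 1)
    (hmeas : ∀ θ, Measurable (pplus θ))
    (hnonneg : ∀ θ y, 0 ≤ pplus θ y)
    (hcont : ∀ θ, ContinuousAt (pplus θ) xplus)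
    (hbound : ∃ ε₀ > (0 : ℝ), ∃ C : ℝ, ∀ θ : Θ, ∀ y ∈ Metric.ball xplus ε₀,
        pX0 θ ^ t₀ * (1 - pX0 θ) ^ m * pplus θ y ≤ C)
    (hIε : ∀ ε > (0 : ℝ), Integrable (fun θ => π θ *
        (pX0 θ ^ t₀ * (1 - pX0 θ) ^ m *
          ((∫ y in Metric.ball xplus ε, pplus θ y) /
            (volume (Metric.ball xplus ε)).toReal))) ν)
    (hI : Integrable
        (fun θ => π θ * (pX0 θ ^ t₀ * (1 - pX0 θ) ^ m * pplus θ xplus)) ν)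
    (hZε : ∀ ε > (0 : ℝ), (∫ θ, π θ *
        (pX0 θ ^ t₀ * (1 - pX0 θ) ^ m *
          ((∫ y in Metric.ball xplus ε, pplus θ y) /
            (volume (Metric.ball xplus ε)).toReal)) ∂ν) ≠ 0)
    (hZ : (∫ θ, π θ * (pX0 θ ^ t₀ * (1 - pX0 θ) ^ m * pplus θ xplus) ∂ν) ≠ 0) :
    ∀ θ : Θ, Filter.Tendsto (fun ε : ℝ =>
        π θ * (pX0 θ ^ t₀ * (1 - pX0 θ) ^ m *
          ((∫ y in Metric.ball xplus ε, pplus θ y) /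
            (volume (Metric.ball xplus ε)).toReal)) /
        ∫ θ', π θ' * (pX0 θ' ^ t₀ * (1 - pX0 θ') ^ m *
          ((∫ y in Metric.ball xplus ε, pplus θ' y) /
            (volume (Metric.ball xplus ε)).toReal)) ∂ν)
      (nhdsWithin 0 (Set.Ioi 0))
      (nhds (π θ * (pX0 θ ^ t₀ * (1 - pX0 θ) ^ m * pplus θ xplus) /
        ∫ θ', π θ' * (pX0 θ' ^ t₀ * (1 - pX0 θ') ^ m * pplus θ' xplus) ∂ν)) := by
  obtain ⟨ε₀, hε₀, C, hC⟩ := hbound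
  set a : Θ → ℝ := fun θ => pX0 θ ^ t₀ * (1 - pX0 θ) ^ m with ha_def
  have ha0 : ∀ θ, 0 ≤ a θ := fun θ =>
    mul_nonneg (pow_nonneg (hpX0 θ).1 _) (pow_nonneg (by linarith [(hpX0 θ).2]) _)
  set g : Θ → (Fin m → ℝ) → ℝ := fun θ y => a θ * pplus θ y with hg_def
  have hgmeas : ∀ θ, Measurable (g θ) := fun θ => (hmeas θ).const_mul _
  have hg0 : ∀ θ y, 0 ≤ g θ y := fun θ y => mul_nonneg (ha0 θ) (hnonneg θ y)
  have hgb : ∀ θ, ∀ y ∈ Metric.ball xplus ε₀, |g θ y| ≤ max C 0 := fun θ y hy => by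
    rw [abs_of_nonneg (hg0 θ y)]
    exact le_trans (hC θ y hy) (le_max_left _ _)
  have hgcont : ∀ θ, ContinuousAt (g θ) xplus := fun θ => (hcont θ).const_mul _
  -- pointwise convergence of the numerator
  have hptw : ∀ θ, Filter.Tendsto (fun ε : ℝ =>
      π θ * (pX0 θ ^ t₀ * (1 - pX0 θ) ^ m *
        ((∫ y in Metric.ball xplus ε, pplus θ y) /
          (volume (Metric.ball xplus ε)).toReal)))
      (nhdsWithin 0 (Set.Ioi 0))
      (nhds (π θ * (pX0 θ ^ t₀ * (1 - pX0 θ) ^ m * pplus θ xplus))) := by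
    intro θ
    have h := (aux_avg_tendsto xplus (hgmeas θ) (max C 0) ε₀ hε₀ (hgb θ)
      (hgcont θ)).const_mul (π θ)
    refine h.congr fun ε => ?_
    show π θ * ((∫ y in Metric.ball xplus ε, a θ * pplus θ y) / _) = _
    rw [integral_const_mul]
    ring
  -- convergence of the denominator by dominated convergence
  have hden : Filter.Tendsto (fun ε : ℝ =>
      ∫ θ', π θ' * (pX0 θ' ^ t₀ * (1 - pX0 θ') ^ m *
        ((∫ y in Metric.ball xplus ε, pplus θ' y) /
          (volume (Metric.ball xplus ε)).toReal)) ∂ν)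
      (nhdsWithin 0 (Set.Ioi 0))
      (nhds (∫ θ', π θ' * (pX0 θ' ^ t₀ * (1 - pX0 θ') ^ m * pplus θ' xplus) ∂ν)) := by
    refine tendsto_integral_filter_of_dominated_convergence
      (fun θ' => π θ' * max C 0) ?_ ?_ (hπint.mul_const _) (Filter.Eventually.of_forall hptw)
    · filter_upwards [self_mem_nhdsWithin] with ε hε
      exact (hIε ε hε).aestronglyMeasurable
    · filter_upwards [Ioo_mem_nhdsGT_of_mem (Set.left_mem_Ico.mpr hε₀)] with ε hε
      refine Filter.Eventually.of_forall fun θ' => ?_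
      have hε0 : (0:ℝ) < ε := hε.1
      have hsub : Metric.ball xplus ε ⊆ Metric.ball xplus ε₀ :=
        Metric.ball_subset_ball hε.2.le
      have hVpos : 0 < (volume (Metric.ball xplus ε)).toReal :=
        ENNReal.toReal_pos (Metric.measure_ball_pos volume xplus hε0).ne'
          measure_ball_lt_top.ne
      have hint : IntegrableOn (g θ') (Metric.ball xplus ε) volume :=
        aux_integrableOn xplus (hgmeas θ') ε (max C 0) fun y hy => hgb θ' y (hsub hy)
      have hI0 : 0 ≤ ∫ y in Metric.ball xplus ε, g θ' y :=
        setIntegral_nonneg measurableSet_ball fun y _ => hg0 θ' y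
      have hIC : (∫ y in Metric.ball xplus ε, g θ' y)
          ≤ max C 0 * (volume (Metric.ball xplus ε)).toReal := by
        calc (∫ y in Metric.ball xplus ε, g θ' y)
            ≤ ∫ _y in Metric.ball xplus ε, max C 0 := by
              refine setIntegral_mono_on hint
                (integrableOn_const measure_ball_lt_top.ne)
                measurableSet_ball fun y hy => ?_
              have := hgb θ' y (hsub hy)
              rwa [abs_of_nonneg (hg0 θ' y)] at this
          _ = max C 0 * (volume (Metric.ball xplus ε)).toReal := by
              rw [setIntegral_const, smul_eq_mul, mul_comm, measureReal_def]
      have havg : a θ' * ((∫ y in Metric.ball xplus ε, pplus θ' y) /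
          (volume (Metric.ball xplus ε)).toReal)
          = (∫ y in Metric.ball xplus ε, g θ' y) /
            (volume (Metric.ball xplus ε)).toReal := by
        rw [hg_def]; simp only
        rw [integral_const_mul]; ring
      have havg0 : 0 ≤ a θ' * ((∫ y in Metric.ball xplus ε, pplus θ' y) /
          (volume (Metric.ball xplus ε)).toReal) := by
        rw [havg]; exact div_nonneg hI0 hVpos.le
      have havgC : a θ' * ((∫ y in Metric.ball xplus ε, pplus θ' y) /
          (volume (Metric.ball xplus ε)).toReal) ≤ max C 0 := by
        rw [havg, div_le_iff₀ hVpos]; exact hIC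
      rw [Real.norm_eq_abs, abs_of_nonneg (mul_nonneg (hπ0 θ') havg0)]
      exact mul_le_mul_of_nonneg_left havgC (hπ0 θ')
  intro θ
  exact (hptw θ).div hden hZ
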